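/- For each n, normal lax functors from the linear order [n] to the one-object 2-category Σ2 (delooping of the monoidal poset (2, ∨, 0)) are in bijection with reflexive symmetric relations on {0,...,n} having the interpolation property, via F ↦ {(i,j) : F(i ≤ j) = 0 or F(j ≤ i) = 0}. -/
import Mathlib

section Aux15

variable (n : ℕ)

private abbrev FType := {F : ∀ i j : Fin (n+1), i ≤ j → Bool //
            (∀ i (h : i ≤ i), F i i h = false) ∧
            (∀ i j k (hij : i ≤ j) (hjk : j ≤ k),
              (F i j hij || F j k hjk) ≤ F i k (hij.trans hjk))}

private abbrev RType := {R : Fin (n+1) → Fin (n+1) → Prop //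
            (∀ i, R i i) ∧ (∀ i j, R i j → R j i) ∧
            (∀ i j k, i ≤ j → j ≤ k → R i k → R i j ∧ R j k)}

private def fwd (F : FType n) : RType n := by
  refine ⟨fun i j =>
      (∃ h : i ≤ j, F.val i j h = false) ∨ (∃ h : j ≤ i, F.val j i h = false), ?_, ?_, ?_⟩
  · intro i; exact Or.inl ⟨le_refl i, F.2.1 i (le_refl i)⟩
  · intro i j h; exact h.symm
  · rintro i j k hij hjk (⟨hik, hF⟩ | ⟨hki, hF⟩)
    · have hle := F.2.2 i j k hij hjk
      rw [hF] at hle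
      have h2 : F.val i j hij = false ∧ F.val j k hjk = false := by
        cases hb : F.val i j hij <;> cases hc : F.val j k hjk <;> rw [hb, hc] at hle
        · exact ⟨rfl, rfl⟩
        all_goals exact absurd hle (by decide)
      exact ⟨Or.inl ⟨hij, h2.1⟩, Or.inl ⟨hjk, h2.2⟩⟩
    · have hji : j = i := le_antisymm (hjk.trans hki) hij
      have hki' : k = i := le_antisymm hki (hij.trans hjk)
      subst hji; subst hki'
      exact ⟨Or.inl ⟨hij, F.2.1 _ hij⟩, Or.inl ⟨hjk, F.2.1 _ hjk⟩⟩

open Classical in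
private noncomputable def bval (R : Fin (n+1) → Fin (n+1) → Prop) (i j : Fin (n+1)) : Bool :=
  if R i j then false else true

private theorem bval_false_iff (R : Fin (n+1) → Fin (n+1) → Prop) (i j : Fin (n+1)) :
    bval n R i j = false ↔ R i j := by
  by_cases hr : R i j <;> simp [bval, hr]

private theorem bval_true_iff (R : Fin (n+1) → Fin (n+1) → Prop) (i j : Fin (n+1)) :
    bval n R i j = true ↔ ¬ R i j := by
  by_cases hr : R i j <;> simp [bval, hr]

private noncomputable def bwd (R : RType n) : FType n := by
  refine ⟨fun i j _ => bval n R.val i j, ?_, ?_⟩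
  · intro i _; exact (bval_false_iff n _ i i).mpr (R.2.1 i)
  · intro i j k hij hjk
    show (bval n R.val i j || bval n R.val j k) ≤ bval n R.val i k
    by_cases hik : R.val i k
    · have h2 := R.2.2.2 i j k hij hjk hik
      rw [(bval_false_iff n _ i j).mpr h2.1, (bval_false_iff n _ j k).mpr h2.2,
        (bval_false_iff n _ i k).mpr hik]
      exact le_refl _
    · rw [(bval_true_iff n _ i k).mpr hik]; exact Bool.le_true _

private theorem bwd_fwd (F : FType n) : bwd n (fwd n F) = F := by
  apply Subtype.ext
  funext i j h
  show bval n (fwd n F).val i j = F.val i j h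
  cases hF : F.val i j h with
  | false => exact (bval_false_iff n _ i j).mpr (Or.inl ⟨h, hF⟩)
  | true =>
    apply (bval_true_iff n _ i j).mpr
    rintro (⟨h', hf⟩ | ⟨h', hf⟩)
    · rw [hF] at hf; exact Bool.true_eq_false.mp hf
    · have hji : j = i := le_antisymm h' h
      subst hji
      rw [F.2.1 _ h] at hF
      exact Bool.false_eq_true.mp hF

private theorem fwd_bwd (R : RType n) : fwd n (bwd n R) = R := by
  apply Subtype.ext
  funext i j
  apply propext
  show ((∃ h : i ≤ j, (bwd n R).val i j h = false) ∨
      (∃ h : j ≤ i, (bwd n R).val j i h = false)) ↔ R.val i j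
  have key : ∀ (a b : Fin (n+1)) (h : a ≤ b), (bwd n R).val a b h = false ↔ R.val a b :=
    fun a b _ => bval_false_iff n R.val a b
  constructor
  · rintro (⟨h, hf⟩ | ⟨h, hf⟩)
    · exact (key i j h).mp hf
    · exact R.2.2.1 j i ((key j i h).mp hf)
  · intro hr
    rcases le_total i j with h | h
    · exact Or.inl ⟨h, (key i j h).mpr hr⟩
    · exact Or.inr ⟨h, (key j i h).mpr (R.2.2.1 i j hr)⟩

end Aux15

/-- normal lax functors [n] → Σ2 are in bijection with reflexive
symmetric interpolating relations on {0,...,n}, via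
F ↦ {(i,j) : F(i ≤ j) = 0 or F(j ≤ i) = 0}. -/
theorem stmt15 (n : ℕ) :
    ∃ e : {F : ∀ i j : Fin (n+1), i ≤ j → Bool //
            (∀ i (h : i ≤ i), F i i h = false) ∧
            (∀ i j k (hij : i ≤ j) (hjk : j ≤ k),
              (F i j hij || F j k hjk) ≤ F i k (hij.trans hjk))} ≃
          {R : Fin (n+1) → Fin (n+1) → Prop //
            (∀ i, R i i) ∧ (∀ i j, R i j → R j i) ∧
            (∀ i j k, i ≤ j → j ≤ k → R i k → R i j ∧ R j k)},
      ∀ F, (e F).val = fun i j =>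
        (∃ h : i ≤ j, F.val i j h = false) ∨ (∃ h : j ≤ i, F.val j i h = false) := by
  exact ⟨⟨fwd n, bwd n, bwd_fwd n, fwd_bwd n⟩, fun F => rfl⟩
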